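/- The generating function y = Σ_{n≥1} s(n)x^n of the little Schröder numbers satisfies the algebraic equation 2y² − (1+x)y + x = 0, equivalently y = (1 + x − √(1 − 6x + x²))/4 as formal power series. -/

import Mathlib

/-- A Schröder tree: a single node, or a root with at least two ordered subtrees,
encoded as two subtrees plus a (possibly empty) list of further subtrees. -/
inductive SchTree : Type
  | leaf : SchTree
  | node : SchTree → SchTree → List SchTree → SchTree

mutual
/-- Number of leaves of a Schröder tree. -/
def SchTree.leaves : SchTree → ℕ
  | .leaf => 1
  | .node t₁ t₂ ts => t₁.leaves + t₂.leaves + SchTree.leavesList ts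
def SchTree.leavesList : List SchTree → ℕ
  | [] => 0
  | t :: ts => t.leaves + SchTree.leavesList ts
end

/-- The number of Schröder trees with `n` leaves. -/
noncomputable def schS (n : ℕ) : ℕ := Nat.card {t : SchTree // t.leaves = n}


theorem SchTree.leaves_pos : ∀ t : SchTree, 1 ≤ t.leaves
  | .leaf => le_refl _
  | .node t₁ _ _ => le_trans (SchTree.leaves_pos t₁) (by simp [SchTree.leaves]; omega)

/-- Generic antidiagonal decomposition of a weighted pair type. -/
def pairEquiv {A B : Type*} (w1 : A → ℕ) (w2 : B → ℕ) (n : ℕ) :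
    {p : A × B // w1 p.1 + w2 p.2 = n} ≃
      Σ kl : Finset.HasAntidiagonal.antidiagonal n, {a : A // w1 a = (kl : ℕ × ℕ).1} × {b : B // w2 b = (kl : ℕ × ℕ).2} where
  toFun p := ⟨⟨(w1 p.1.1, w2 p.1.2), by simp [Finset.HasAntidiagonal.mem_antidiagonal, p.2]⟩,
    ⟨p.1.1, rfl⟩, ⟨p.1.2, rfl⟩⟩
  invFun x := ⟨(x.2.1.1, x.2.2.1), by
    have := x.1.2
    rw [Finset.HasAntidiagonal.mem_antidiagonal] at this
    rw [x.2.1.2, x.2.2.2, this]⟩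
  left_inv p := rfl
  right_inv x := by
    obtain ⟨⟨⟨k, l⟩, hkl⟩, ⟨a, ha⟩, ⟨b, hb⟩⟩ := x
    simp only at ha hb
    subst ha; subst hb
    rfl

/-- Decomposition of trees with `n` leaves by the root constructor. -/
def treeEquiv (n : ℕ) :
    {t : SchTree // t.leaves = n} ≃
      {_u : Unit // (1 : ℕ) = n} ⊕
        {p : SchTree × SchTree × List SchTree //
          p.1.leaves + (p.2.1.leaves + SchTree.leavesList p.2.2) = n} where
  toFun t := match t with
    | ⟨.leaf, h⟩ => Sum.inl ⟨(), h⟩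
    | ⟨.node t₁ t₂ ts, h⟩ => Sum.inr ⟨(t₁, t₂, ts), by
        simp only [SchTree.leaves] at h; simp only []; omega⟩
  invFun x := match x with
    | Sum.inl ⟨_, h⟩ => ⟨.leaf, h⟩
    | Sum.inr ⟨(t₁, t₂, ts), h⟩ => ⟨.node t₁ t₂ ts, by
        simp only [SchTree.leaves]; simp only [] at h; omega⟩
  left_inv t := by
    obtain ⟨t, h⟩ := t
    cases t <;> rfl
  right_inv x := by
    obtain (⟨u, h⟩ | ⟨⟨t₁, t₂, ts⟩, h⟩) := x
    · rfl
    · rfl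

/-- Decomposition of lists of trees with `n` leaves in total. -/
def listEquiv (n : ℕ) :
    {l : List SchTree // SchTree.leavesList l = n} ≃
      {_u : Unit // (0 : ℕ) = n} ⊕
        {p : SchTree × List SchTree // p.1.leaves + SchTree.leavesList p.2 = n} where
  toFun l := match l with
    | ⟨[], h⟩ => Sum.inl ⟨(), h⟩
    | ⟨t :: ts, h⟩ => Sum.inr ⟨(t, ts), by simpa [SchTree.leavesList] using h⟩
  invFun x := match x with
    | Sum.inl ⟨_, h⟩ => ⟨[], h⟩
    | Sum.inr ⟨(t, ts), h⟩ => ⟨t :: ts, by simpa [SchTree.leavesList] using h⟩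
  left_inv l := by
    obtain ⟨l, h⟩ := l
    cases l <;> rfl
  right_inv x := by
    obtain (⟨u, h⟩ | ⟨⟨t, ts⟩, h⟩) := x
    · rfl
    · rfl

theorem isEmpty_tree_zero : IsEmpty {t : SchTree // t.leaves = 0} :=
  ⟨fun t => by have := SchTree.leaves_pos t.1; omega⟩

theorem finite_pair {A B : Type*} {w1 : A → ℕ} {w2 : B → ℕ} {n : ℕ}
    (h : ∀ kl : ℕ × ℕ, kl ∈ Finset.HasAntidiagonal.antidiagonal n →
      Finite ({a : A // w1 a = kl.1} × {b : B // w2 b = kl.2})) :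
    Finite {p : A × B // w1 p.1 + w2 p.2 = n} := by
  haveI : ∀ kl : Finset.HasAntidiagonal.antidiagonal n,
      Finite ({a : A // w1 a = (kl : ℕ × ℕ).1} × {b : B // w2 b = (kl : ℕ × ℕ).2}) :=
    fun kl => h kl kl.2
  exact Finite.of_equiv _ (pairEquiv w1 w2 n).symm

theorem finite_empty_left {A B : Type*} (h : IsEmpty A) : Finite (A × B) := by
  haveI := h; infer_instance

theorem finite_empty_right {A B : Type*} (h : IsEmpty B) : Finite (A × B) := by
  haveI := h; infer_instance

theorem finite_TL (n : ℕ) : Finite {t : SchTree // t.leaves = n} ∧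
    Finite {l : List SchTree // SchTree.leavesList l = n} := by
  induction n using Nat.strong_induction_on with
  | _ n ih =>
  have hT : Finite {t : SchTree // t.leaves = n} := by
    haveI : Finite {_u : Unit // (1 : ℕ) = n} := inferInstance
    haveI : Finite {p : SchTree × SchTree × List SchTree //
        p.1.leaves + (p.2.1.leaves + SchTree.leavesList p.2.2) = n} := by
      apply finite_pair (w1 := SchTree.leaves)
        (w2 := fun q : SchTree × List SchTree => q.1.leaves + SchTree.leavesList q.2)
      intro kl hkl
      rw [Finset.HasAntidiagonal.mem_antidiagonal] at hkl
      rcases Nat.eq_zero_or_pos kl.1 with h0 | h1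
      · exact finite_empty_left (by rw [h0]; exact isEmpty_tree_zero)
      · have hkl2 : kl.2 < n := by omega
        haveI : Finite {q : SchTree × List SchTree //
            q.1.leaves + SchTree.leavesList q.2 = kl.2} := by
          apply finite_pair
          intro ab hab
          rw [Finset.HasAntidiagonal.mem_antidiagonal] at hab
          haveI := (ih ab.1 (by omega)).1
          haveI := (ih ab.2 (by omega)).2
          infer_instance
        rcases Nat.lt_or_ge kl.1 n with hlt | hge
        · haveI := (ih kl.1 hlt).1
          infer_instance
        · have h2 : kl.2 = 0 := by omega
          apply finite_empty_right
          exact ⟨fun q => by have := SchTree.leaves_pos q.1.1; have := q.2; omega⟩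
    exact Finite.of_equiv _ (treeEquiv n).symm
  have hL : Finite {l : List SchTree // SchTree.leavesList l = n} := by
    haveI : Finite {p : SchTree × List SchTree //
        p.1.leaves + SchTree.leavesList p.2 = n} := by
      apply finite_pair
      intro kl hkl
      rw [Finset.HasAntidiagonal.mem_antidiagonal] at hkl
      rcases Nat.eq_zero_or_pos kl.1 with h0 | h1
      · exact finite_empty_left (by rw [h0]; exact isEmpty_tree_zero)
      · haveI := (ih kl.2 (by omega)).2
        haveI : Finite {a : SchTree // a.leaves = kl.1} := by
          rcases Nat.lt_or_ge kl.1 n with hlt | hge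
          · exact (ih kl.1 hlt).1
          · have : kl.1 = n := by omega
            rw [this]; exact hT
        infer_instance
    exact Finite.of_equiv _ (listEquiv n).symm
  exact ⟨hT, hL⟩

instance instFiniteT (n : ℕ) : Finite {t : SchTree // t.leaves = n} := (finite_TL n).1
instance instFiniteL (n : ℕ) : Finite {l : List SchTree // SchTree.leavesList l = n} :=
  (finite_TL n).2

theorem nat_card_sigma {ι : Type*} [Fintype ι] (f : ι → Type*) [∀ i, Finite (f i)] :
    Nat.card (Σ i, f i) = ∑ i, Nat.card (f i) := by
  classical
  letI : ∀ i, Fintype (f i) := fun i => Fintype.ofFinite _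
  rw [Nat.card_eq_fintype_card, Fintype.card_sigma]
  exact Finset.sum_congr rfl fun i _ => (Nat.card_eq_fintype_card).symm

theorem card_pair {A B : Type*} (w1 : A → ℕ) (w2 : B → ℕ) (n : ℕ)
    [∀ k, Finite {a : A // w1 a = k}] [∀ k, Finite {b : B // w2 b = k}] :
    Nat.card {p : A × B // w1 p.1 + w2 p.2 = n} =
      ∑ kl ∈ Finset.HasAntidiagonal.antidiagonal n,
        Nat.card {a : A // w1 a = kl.1} * Nat.card {b : B // w2 b = kl.2} := by
  rw [Nat.card_congr (pairEquiv w1 w2 n), nat_card_sigma]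
  rw [← Finset.sum_coe_sort (Finset.HasAntidiagonal.antidiagonal n)
    (fun kl => Nat.card {a : A // w1 a = kl.1} * Nat.card {b : B // w2 b = kl.2})]
  exact Finset.sum_congr rfl fun kl _ => Nat.card_prod _ _

instance instFiniteP (n : ℕ) :
    Finite {p : SchTree × List SchTree // p.1.leaves + SchTree.leavesList p.2 = n} :=
  finite_pair fun kl _ => inferInstance

instance instFiniteP2 (n : ℕ) :
    Finite {p : SchTree × SchTree × List SchTree //
      p.1.leaves + (p.2.1.leaves + SchTree.leavesList p.2.2) = n} :=
  finite_pair (w1 := SchTree.leaves)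
    (w2 := fun q : SchTree × List SchTree => q.1.leaves + SchTree.leavesList q.2)
    fun kl _ => inferInstance

noncomputable def schS' (n : ℕ) : ℕ := Nat.card {t : SchTree // t.leaves = n}
noncomputable def gS (n : ℕ) : ℕ := Nat.card {l : List SchTree // SchTree.leavesList l = n}

theorem card_unit_subtype (m n : ℕ) :
    Nat.card {_u : Unit // m = n} = if n = m then 1 else 0 := by
  split
  · next h => subst h; rw [Nat.card_congr (Equiv.subtypeUnivEquiv fun _ => rfl)]; simp
  · next h =>
    haveI : IsEmpty {_u : Unit // m = n} := ⟨fun u => h u.2.symm⟩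
    simp [Nat.card_of_isEmpty]

theorem schS'_eq (n : ℕ) :
    schS' n = (if n = 1 then 1 else 0) +
      ∑ kl ∈ Finset.HasAntidiagonal.antidiagonal n, schS' kl.1 *
        ∑ ab ∈ Finset.HasAntidiagonal.antidiagonal kl.2, schS' ab.1 * gS ab.2 := by
  rw [schS', Nat.card_congr (treeEquiv n), Nat.card_sum, card_unit_subtype]
  congr 1
  rw [show {p : SchTree × SchTree × List SchTree //
        p.1.leaves + (p.2.1.leaves + SchTree.leavesList p.2.2) = n} =
      {p : SchTree × (SchTree × List SchTree) //
        SchTree.leaves p.1 +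
          (fun q : SchTree × List SchTree => q.1.leaves + SchTree.leavesList q.2) p.2 = n}
    from rfl]
  rw [card_pair SchTree.leaves
    (fun q : SchTree × List SchTree => q.1.leaves + SchTree.leavesList q.2) n]
  exact Finset.sum_congr rfl fun kl _ => by
    rw [card_pair SchTree.leaves SchTree.leavesList kl.2]; rfl

theorem gS_eq (n : ℕ) :
    gS n = (if n = 0 then 1 else 0) +
      ∑ kl ∈ Finset.HasAntidiagonal.antidiagonal n, schS' kl.1 * gS kl.2 := by
  rw [gS, Nat.card_congr (listEquiv n), Nat.card_sum, card_unit_subtype,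
    card_pair SchTree.leaves SchTree.leavesList n]
  rfl

theorem schS'_zero : schS' 0 = 0 := by
  haveI := isEmpty_tree_zero
  simp [schS', Nat.card_of_isEmpty]

noncomputable def Yps : PowerSeries ℚ := PowerSeries.mk fun n => (schS' n : ℚ)
noncomputable def Gps : PowerSeries ℚ := PowerSeries.mk fun n => (gS n : ℚ)

theorem G_eq : Gps = 1 + Yps * Gps := by
  ext n
  simp only [Gps, Yps, map_add, PowerSeries.coeff_mk, PowerSeries.coeff_mul,
    PowerSeries.coeff_one]
  rw [gS_eq n]
  push_cast
  ring_nf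

theorem Y_eq : Yps = PowerSeries.X + Yps * (Yps * Gps) := by
  ext n
  simp only [Yps, Gps, map_add, PowerSeries.coeff_mk, PowerSeries.coeff_mul,
    PowerSeries.coeff_X]
  rw [schS'_eq n]
  push_cast
  ring_nf


/-- The generating function `y = Σ_{n ≥ 1} s(n) xⁿ` of the little Schröder numbers
satisfies `2y² - (1+x)y + x = 0`; equivalently `(4y - (1+x))² = 1 - 6x + x²`,
i.e. `y = (1 + x - √(1-6x+x²))/4`. -/
theorem schroeder_generating_function :
    let y : PowerSeries ℚ := PowerSeries.mk fun n => if n = 0 then 0 else (schS n : ℚ)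
    2 * y ^ 2 - (1 + PowerSeries.X) * y + PowerSeries.X = 0 ∧
    (4 * y - (1 + PowerSeries.X)) ^ 2 =
      1 - 6 * PowerSeries.X + PowerSeries.X ^ 2 := by
  intro y
  have hy : y = Yps := by
    ext n
    simp only [y, Yps, PowerSeries.coeff_mk]
    split
    · next h => subst h; rw [show schS' 0 = 0 from schS'_zero]; simp
    · rfl
  have h1 := Y_eq
  have h2 := G_eq
  have hfirst : 2 * y ^ 2 - (1 + PowerSeries.X) * y + PowerSeries.X = 0 := by
    rw [hy]
    linear_combination (Yps - 1) * h1 - Yps ^ 2 * h2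
  exact ⟨hfirst, by linear_combination (8 : PowerSeries ℚ) * hfirst⟩
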